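/- Let Z = I_r ⊕ 0 ∈ S^n₊ and for Y ∈ S^n write Y = [[Y₁₁, Y₁₂], [Y₁₂ᵀ, Y₂₂]] with Y₁₁ of size r×r and Y₂₂ of size (n−r)×(n−r). Then: ldir(Z, S^n₊) = {Y : Y₁₂ = 0 and Y₂₂ = 0}; cl dir(Z, S^n₊) = {Y : Y₂₂ ⪰ 0}; tan(Z, S^n₊) = {Y : Y₂₂ = 0}; and dir(Z, S^n₊) = {Y : Y₂₂ ⪰ 0 and R(Y₁₂ᵀ) ⊆ R(Y₂₂)}, where R(M) denotes the column space of a matrix M. -/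

import Mathlib

open Matrix

noncomputable section

/-- The set of feasible directions at `Z` in a set `C` of matrices. -/
def dirMat {n : ℕ} (Z : Matrix (Fin n) (Fin n) ℝ)
    (C : Set (Matrix (Fin n) (Fin n) ℝ)) : Set (Matrix (Fin n) (Fin n) ℝ) :=
  {V | ∃ ε : ℝ, 0 < ε ∧ Z + ε • V ∈ C}

/-- The lineality space of the set of feasible directions at `Z` in `C`. -/
def ldirMat {n : ℕ} (Z : Matrix (Fin n) (Fin n) ℝ)
    (C : Set (Matrix (Fin n) (Fin n) ℝ)) : Set (Matrix (Fin n) (Fin n) ℝ) :=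
  {V | V ∈ dirMat Z C ∧ -V ∈ dirMat Z C}

/-- The tangent space at `Z` in `C`. -/
def tanMat {n : ℕ} (Z : Matrix (Fin n) (Fin n) ℝ)
    (C : Set (Matrix (Fin n) (Fin n) ℝ)) : Set (Matrix (Fin n) (Fin n) ℝ) :=
  {V | V ∈ closure (dirMat Z C) ∧ -V ∈ closure (dirMat Z C)}

/-- The cone of positive semidefinite `n × n` real matrices. -/
def PSDCone (n : ℕ) : Set (Matrix (Fin n) (Fin n) ℝ) := {M | M.PosSemidef}

/-- The block matrix `I_r ⊕ 0` of size `n × n`. -/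
def ZMat (n r : ℕ) : Matrix (Fin n) (Fin n) ℝ :=
  fun i j => if i = j ∧ (i : ℕ) < r then 1 else 0

/-- The bottom-right `(n-r) × (n-r)` block `Y₂₂` of `Y` is positive semidefinite. -/
def BottomBlockPSD {n : ℕ} (r : ℕ) (Y : Matrix (Fin n) (Fin n) ℝ) : Prop :=
  ∀ x : Fin n → ℝ, (∀ i : Fin n, (i : ℕ) < r → x i = 0) → 0 ≤ x ⬝ᵥ (Y *ᵥ x)

namespace PsdAux

variable {n r : ℕ}

lemma zmat_mulVec (x : Fin n → ℝ) :
    ZMat n r *ᵥ x = fun i : Fin n => if (i : ℕ) < r then x i else 0 := by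
  funext i
  simp only [mulVec, dotProduct, ZMat]
  rw [Finset.sum_eq_single i]
  · by_cases h : (i : ℕ) < r <;> simp [h]
  · intro j _ hj; simp [Ne.symm hj]
  · simp

lemma zmat_quad (x : Fin n → ℝ) :
    x ⬝ᵥ (ZMat n r *ᵥ x) = ∑ i : Fin n, (if (i : ℕ) < r then x i ^ 2 else 0) := by
  rw [zmat_mulVec]
  simp only [dotProduct]
  refine Finset.sum_congr rfl fun i _ => ?_
  by_cases h : (i : ℕ) < r <;> simp [h] <;> ring

lemma zmat_isHermitian : (ZMat n r).IsHermitian := by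
  ext i j
  simp only [ZMat, conjTranspose_apply, star_trivial, transpose_apply]
  by_cases h : i = j
  · subst h; rfl
  · simp [h, Ne.symm h, fun h' : j = i => h h'.symm]

lemma quad_eq_sum (M : Matrix (Fin n) (Fin n) ℝ) (x : Fin n → ℝ) :
    x ⬝ᵥ M *ᵥ x = ∑ i, ∑ j, x i * M i j * x j := by
  simp [dotProduct, mulVec, Finset.mul_sum, mul_assoc]

lemma quad_bound (M : Matrix (Fin n) (Fin n) ℝ) (x : Fin n → ℝ) :
    |x ⬝ᵥ M *ᵥ x| ≤ (∑ i, ∑ j, |M i j|) * ∑ i, x i ^ 2 := by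
  rw [quad_eq_sum, Finset.sum_mul]
  calc |∑ i, ∑ j, x i * M i j * x j| ≤ ∑ i, |∑ j, x i * M i j * x j| :=
        Finset.abs_sum_le_sum_abs _ _
    _ ≤ ∑ i, ∑ j, |x i * M i j * x j| :=
        Finset.sum_le_sum fun i _ => Finset.abs_sum_le_sum_abs _ _
    _ ≤ ∑ i, (∑ j, |M i j|) * ∑ k, x k ^ 2 := by
        refine Finset.sum_le_sum fun i _ => ?_
        rw [Finset.sum_mul]
        refine Finset.sum_le_sum fun j _ => ?_
        have h1 : |x i * M i j * x j| = |M i j| * (|x i| * |x j|) := by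
          rw [abs_mul, abs_mul]; ring
        rw [h1]
        refine mul_le_mul_of_nonneg_left ?_ (abs_nonneg _)
        have h2 : |x i| * |x j| ≤ (x i ^ 2 + x j ^ 2) / 2 := by
          nlinarith [sq_nonneg (|x i| - |x j|), sq_abs (x i), sq_abs (x j)]
        refine h2.trans ?_
        have hi : x i ^ 2 ≤ ∑ k, x k ^ 2 :=
          Finset.single_le_sum (fun k _ => sq_nonneg (x k)) (Finset.mem_univ i)
        have hj : x j ^ 2 ≤ ∑ k, x k ^ 2 :=
          Finset.single_le_sum (fun k _ => sq_nonneg (x k)) (Finset.mem_univ j)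
        linarith

end PsdAux

namespace B2
variable {n r : ℕ}

lemma range_ct (A : Matrix (Fin n) (Fin n) ℝ) :
    LinearMap.range (Aᴴ * A).mulVecLin = LinearMap.range Aᴴ.mulVecLin := by
  apply Submodule.eq_of_le_of_finrank_eq
  · rw [Matrix.mulVecLin_mul]; exact LinearMap.range_comp_le_range _ _
  · have h1 := Matrix.rank_conjTranspose_mul_self A
    have h2 := Matrix.rank_conjTranspose A
    simp only [Matrix.rank] at h1 h2
    rw [h1, h2]

lemma psd_row_range {M : Matrix (Fin n) (Fin n) ℝ} (hM : M.PosSemidef) (i : Fin n) :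
    ∃ d : Fin n → ℝ, (∀ k : Fin n, (k : ℕ) < r → d k = 0) ∧
      ∀ j : Fin n, r ≤ (j : ℕ) → M i j = (M *ᵥ d) j := by
  obtain ⟨B, hB⟩ : ∃ B : Matrix (Fin n) (Fin n) ℝ, M = Bᴴ * B := by
    open scoped MatrixOrder Matrix.Norms.L2Operator in
    exact CStarAlgebra.nonneg_iff_eq_star_mul_self.mp hM.nonneg
  set P : Matrix (Fin n) (Fin n) ℝ :=
    Matrix.diagonal (fun k : Fin n => if r ≤ (k : ℕ) then 1 else 0) with hPdef
  have hP : Pᴴ = P := by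
    simp [hPdef, Matrix.diagonal_conjTranspose]
  have hw : P *ᵥ (M *ᵥ Pi.single i 1) ∈ LinearMap.range ((B * P)ᴴ).mulVecLin := by
    refine ⟨B *ᵥ Pi.single i 1, ?_⟩
    simp only [Matrix.mulVecLin_apply, Matrix.conjTranspose_mul, hP, hB]
    rw [Matrix.mulVec_mulVec, Matrix.mulVec_mulVec, Matrix.mul_assoc]
  rw [← range_ct] at hw
  obtain ⟨x, hx⟩ := hw
  simp only [Matrix.mulVecLin_apply, Matrix.conjTranspose_mul, hP, hB] at hx
  refine ⟨P *ᵥ x, ?_, ?_⟩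
  · intro k hk
    rw [Matrix.mulVec_diagonal]
    simp [Nat.not_le.mpr hk]
  · intro j hj
    have key : P *ᵥ (M *ᵥ (P *ᵥ x)) = P *ᵥ (M *ᵥ Pi.single i 1) := by
      calc P *ᵥ (M *ᵥ (P *ᵥ x)) = (P * M * P) *ᵥ x := by
            rw [Matrix.mulVec_mulVec, Matrix.mulVec_mulVec]
        _ = (P * Bᴴ * (B * P)) *ᵥ x := by rw [hB]; simp only [Matrix.mul_assoc]
        _ = P *ᵥ ((Bᴴ * B) *ᵥ Pi.single i 1) := hx
        _ = P *ᵥ (M *ᵥ Pi.single i 1) := by rw [hB]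
    have h2 := congrFun key j
    rw [Matrix.mulVec_diagonal, Matrix.mulVec_diagonal, if_pos hj, one_mul, one_mul] at h2
    rw [h2, Matrix.mulVec_single_one]
    have := hM.1.apply i j
    simp only [star_trivial] at this
    rw [Matrix.col_apply]
    exact this.symm
end B2

namespace B3
variable {n r : ℕ}

lemma quad_comm {V : Matrix (Fin n) (Fin n) ℝ} (hsym : V.IsSymm) (a b : Fin n → ℝ) :
    a ⬝ᵥ (V *ᵥ b) = b ⬝ᵥ (V *ᵥ a) := by
  simp only [dotProduct, mulVec, Finset.mul_sum]
  rw [Finset.sum_comm]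
  refine Finset.sum_congr rfl fun i _ => Finset.sum_congr rfl fun j _ => ?_
  rw [Matrix.IsSymm.ext_iff.mp hsym i j]
  ring

lemma zmat_symm_apply (i j : Fin n) : ZMat n r j i = ZMat n r i j := by
  simp only [ZMat]
  by_cases h : i = j
  · subst h; rfl
  · rw [if_neg, if_neg]
    · rintro ⟨h1, -⟩; exact h h1
    · rintro ⟨h1, -⟩; exact h h1.symm

end B3


namespace B4
variable {n r : ℕ}

lemma dir_forward {V : Matrix (Fin n) (Fin n) ℝ} (hV : V ∈ dirMat (ZMat n r) (PSDCone n)) :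
    V.IsSymm ∧ BottomBlockPSD r V ∧
      ∀ i : Fin n, (i : ℕ) < r →
        ∃ d : Fin n → ℝ, (∀ k : Fin n, (k : ℕ) < r → d k = 0) ∧
          ∀ j : Fin n, r ≤ (j : ℕ) → V i j = ∑ k, V j k * d k := by
  obtain ⟨ε, hε, hM⟩ := hV
  have hMps : (ZMat n r + ε • V).PosSemidef := hM
  have happ : ∀ i j, V j i = V i j := by
    intro i j
    have h1 := hMps.1.apply i j
    simp only [star_trivial, Matrix.add_apply, Matrix.smul_apply, smul_eq_mul] at h1
    have hz := B3.zmat_symm_apply (n := n) (r := r) i j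
    have h2 : ε * V j i = ε * V i j := by linarith
    exact mul_left_cancel₀ hε.ne' h2
  have hVsymm : V.IsSymm := Matrix.IsSymm.ext fun i j => happ i j
  have hbb : BottomBlockPSD r V := by
    intro x hx
    have h0 := hMps.dotProduct_mulVec_nonneg x
    simp only [star_trivial] at h0
    have hsplit : x ⬝ᵥ ((ZMat n r + ε • V) *ᵥ x)
        = x ⬝ᵥ (ZMat n r *ᵥ x) + ε * (x ⬝ᵥ (V *ᵥ x)) := by
      rw [Matrix.add_mulVec, Matrix.smul_mulVec, dotProduct_add, dotProduct_smul,
        smul_eq_mul]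
    have hz : x ⬝ᵥ (ZMat n r *ᵥ x) = 0 := by
      rw [PsdAux.zmat_quad]
      refine Finset.sum_eq_zero fun i _ => ?_
      by_cases h : (i : ℕ) < r
      · simp [h, hx i h]
      · simp [h]
    rw [hsplit, hz, zero_add] at h0
    nlinarith
  refine ⟨hVsymm, hbb, fun i hi => ?_⟩
  obtain ⟨d, hd0, hd⟩ := B2.psd_row_range (r := r) hMps i
  refine ⟨d, hd0, fun j hj => ?_⟩
  have h1 := hd j hj
  have hZij : ZMat n r i j = 0 := by
    simp only [ZMat]
    rw [if_neg]
    rintro ⟨h1, h2⟩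
    rw [h1] at h2; omega
  have hZjk : ∀ k, ZMat n r j k = 0 := by
    intro k
    simp only [ZMat]
    rw [if_neg]
    rintro ⟨-, h2⟩; omega
  have hL : (ZMat n r + ε • V) i j = ε * V i j := by
    simp [Matrix.add_apply, hZij]
  have hR : ((ZMat n r + ε • V) *ᵥ d) j = ε * ∑ k, V j k * d k := by
    simp only [Matrix.mulVec, dotProduct, Matrix.add_apply, Matrix.smul_apply, smul_eq_mul,
      hZjk, zero_add, Finset.mul_sum]
    exact Finset.sum_congr rfl fun k _ => by ring
  have h2 : ε * V i j = ε * ∑ k, V j k * d k := hL.symm.trans (h1.trans hR)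
  exact mul_left_cancel₀ hε.ne' h2

end B4

namespace B5
variable {n r : ℕ}

lemma dir_backward {V : Matrix (Fin n) (Fin n) ℝ} (hsym : V.IsSymm)
    (hbb : BottomBlockPSD r V)
    (hrow : ∀ i : Fin n, (i : ℕ) < r →
      ∃ d : Fin n → ℝ, (∀ k : Fin n, (k : ℕ) < r → d k = 0) ∧
        ∀ j : Fin n, r ≤ (j : ℕ) → V i j = ∑ k, V j k * d k) :
    V ∈ dirMat (ZMat n r) (PSDCone n) := by
  classical
  obtain ⟨dd, hdd0, hddrow⟩ :
      ∃ dd : Fin n → Fin n → ℝ, (∀ (i k : Fin n), (k : ℕ) < r → dd i k = 0) ∧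
        ∀ (i : Fin n), (i : ℕ) < r → ∀ (j : Fin n), r ≤ (j : ℕ) →
          V i j = ∑ k, V j k * dd i k := by
    refine ⟨fun i => if h : (i : ℕ) < r then (hrow i h).choose else 0, ?_, ?_⟩
    · intro i k hk
      by_cases h : (i : ℕ) < r
      · simp only [dif_pos h]; exact (hrow i h).choose_spec.1 k hk
      · simp [h]
    · intro i h j hj
      simp only [dif_pos h]
      exact (hrow i h).choose_spec.2 j hj
  set C1 := ∑ i, ∑ j, |V i j| with hC1def
  set C2 := ∑ k, ∑ i, (dd i k) ^ 2 with hC2def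
  have hC1 : 0 ≤ C1 :=
    Finset.sum_nonneg fun i _ => Finset.sum_nonneg fun j _ => abs_nonneg _
  have hC2 : 0 ≤ C2 :=
    Finset.sum_nonneg fun k _ => Finset.sum_nonneg fun i _ => sq_nonneg _
  have hCC : 0 ≤ C1 * C2 := mul_nonneg hC1 hC2
  have hden : 0 < C1 + C1 * C2 + 1 := by linarith
  refine ⟨1 / (C1 + C1 * C2 + 1), one_div_pos.mpr hden, ?_⟩
  set ε := 1 / (C1 + C1 * C2 + 1) with hεdef
  have hεpos : 0 < ε := one_div_pos.mpr hden
  have hεeq : ε * (C1 + C1 * C2 + 1) = 1 := by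
    rw [hεdef]
    field_simp
  refine Matrix.PosSemidef.of_dotProduct_mulVec_nonneg ?_ ?_
  · -- IsHermitian
    ext i j
    simp only [Matrix.conjTranspose_apply, star_trivial, Matrix.add_apply, Matrix.smul_apply,
      smul_eq_mul]
    rw [Matrix.IsSymm.ext_iff.mp hsym i j, B3.zmat_symm_apply]
  · intro x
    simp only [star_trivial]
    set u : Fin n → ℝ := fun i => if (i : ℕ) < r then x i else 0 with hu
    set w : Fin n → ℝ := fun i => if (i : ℕ) < r then 0 else x i with hw
    set p : Fin n → ℝ := fun k => ∑ i, u i * dd i k with hp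
    set S := ∑ i, u i ^ 2 with hS
    have hSnn : 0 ≤ S := Finset.sum_nonneg fun i _ => sq_nonneg _
    have hxuw : x = u + w := by
      funext i
      simp only [hu, hw, Pi.add_apply]
      by_cases h : (i : ℕ) < r <;> simp [h]
    -- the quadratic form of ZMat
    have hzq : x ⬝ᵥ (ZMat n r *ᵥ x) = S := by
      rw [PsdAux.zmat_quad, hS]
      refine Finset.sum_congr rfl fun i _ => ?_
      by_cases h : (i : ℕ) < r <;> simp [hu, h]
    -- key dot product identities
    have key1 : ∀ i : Fin n, (i : ℕ) < r → (V *ᵥ w) i = dd i ⬝ᵥ (V *ᵥ w) := by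
      intro i hi
      have h1 : ∀ j, V i j * w j = (∑ k, V j k * dd i k) * w j := by
        intro j
        by_cases hj : r ≤ (j : ℕ)
        · rw [hddrow i hi j hj]
        · simp [hw, Nat.lt_of_not_le hj]
      calc (V *ᵥ w) i = ∑ j, V i j * w j := rfl
        _ = ∑ j, (∑ k, V j k * dd i k) * w j := by
            exact Finset.sum_congr rfl fun j _ => h1 j
        _ = ∑ j, ∑ k, V j k * dd i k * w j := by
            refine Finset.sum_congr rfl fun j _ => ?_
            rw [Finset.sum_mul]
        _ = ∑ k, ∑ j, V j k * dd i k * w j := Finset.sum_comm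
        _ = ∑ k, dd i k * (V *ᵥ w) k := by
            refine Finset.sum_congr rfl fun k _ => ?_
            simp only [mulVec, dotProduct, Finset.mul_sum]
            refine Finset.sum_congr rfl fun j _ => ?_
            rw [Matrix.IsSymm.ext_iff.mp hsym k j]
            ring
        _ = dd i ⬝ᵥ (V *ᵥ w) := rfl
    have key2 : u ⬝ᵥ (V *ᵥ w) = p ⬝ᵥ (V *ᵥ w) := by
      have hL : u ⬝ᵥ (V *ᵥ w) = ∑ i, u i * (dd i ⬝ᵥ (V *ᵥ w)) := by
        refine Finset.sum_congr rfl fun i _ => ?_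
        by_cases h : (i : ℕ) < r
        · rw [key1 i h]
        · simp [hu, h]
      have hR : p ⬝ᵥ (V *ᵥ w) = ∑ i, u i * (dd i ⬝ᵥ (V *ᵥ w)) := by
        simp only [dotProduct, hp, Finset.sum_mul, Finset.mul_sum]
        rw [Finset.sum_comm]
        exact Finset.sum_congr rfl fun i _ => Finset.sum_congr rfl fun k _ => by ring
      rw [hL, hR]
    -- decomposition of the quadratic form of V
    have hVquad : x ⬝ᵥ (V *ᵥ x) =
        u ⬝ᵥ (V *ᵥ u) - p ⬝ᵥ (V *ᵥ p) + (p + w) ⬝ᵥ (V *ᵥ (p + w)) := by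
      rw [hxuw]
      have e1 : ∀ a b : Fin n → ℝ, (a + b) ⬝ᵥ (V *ᵥ (a + b)) =
          a ⬝ᵥ (V *ᵥ a) + a ⬝ᵥ (V *ᵥ b) + b ⬝ᵥ (V *ᵥ a) + b ⬝ᵥ (V *ᵥ b) := by
        intro a b
        simp only [Matrix.mulVec_add, dotProduct_add, add_dotProduct]
        ring
      rw [e1, e1]
      have c1 : w ⬝ᵥ (V *ᵥ u) = u ⬝ᵥ (V *ᵥ w) := B3.quad_comm hsym w u
      have c2 : w ⬝ᵥ (V *ᵥ p) = p ⬝ᵥ (V *ᵥ w) := B3.quad_comm hsym w p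
      rw [c1, c2, key2]
      ring
    -- positivity of the (p+w) part
    have hpw : 0 ≤ (p + w) ⬝ᵥ (V *ᵥ (p + w)) := by
      refine hbb _ fun i hi => ?_
      simp only [Pi.add_apply, hp, hw, if_pos hi, add_zero]
      exact Finset.sum_eq_zero fun k _ => by rw [hdd0 k i hi, mul_zero]
    -- bounds
    have hb1 : |u ⬝ᵥ (V *ᵥ u)| ≤ C1 * S := PsdAux.quad_bound V u
    have hb2 : |p ⬝ᵥ (V *ᵥ p)| ≤ C1 * (C2 * S) := by
      refine (PsdAux.quad_bound V p).trans ?_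
      refine mul_le_mul_of_nonneg_left ?_ hC1
      have hpk : ∀ k : Fin n, p k ^ 2 ≤ (∑ i, dd i k ^ 2) * S := by
        intro k
        have := Finset.sum_mul_sq_le_sq_mul_sq Finset.univ u (fun i => dd i k)
        calc p k ^ 2 = (∑ i, u i * dd i k) ^ 2 := rfl
          _ ≤ (∑ i, u i ^ 2) * ∑ i, dd i k ^ 2 := this
          _ = (∑ i, dd i k ^ 2) * S := by rw [hS]; ring
      calc ∑ k, p k ^ 2 ≤ ∑ k, (∑ i, dd i k ^ 2) * S :=
            Finset.sum_le_sum fun k _ => hpk k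
        _ = C2 * S := by rw [hC2def, Finset.sum_mul]
    -- final computation
    have hsplit : x ⬝ᵥ ((ZMat n r + ε • V) *ᵥ x)
        = S + ε * (x ⬝ᵥ (V *ᵥ x)) := by
      rw [Matrix.add_mulVec, Matrix.smul_mulVec, dotProduct_add, dotProduct_smul,
        smul_eq_mul, hzq]
    rw [hsplit, hVquad]
    have habs1 := abs_le.mp hb1
    have habs2 := abs_le.mp hb2
    nlinarith [mul_le_mul_of_nonneg_left hSnn hεpos.le, hεeq, hεpos,
      mul_nonneg hεpos.le hpw]

end B5

namespace B6
variable {n r : ℕ}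

lemma dir_char :
    dirMat (ZMat n r) (PSDCone n) =
      {Y : Matrix (Fin n) (Fin n) ℝ | Y.IsSymm ∧ BottomBlockPSD r Y ∧
        ∀ i : Fin n, (i : ℕ) < r →
          ∃ d : Fin n → ℝ, (∀ k : Fin n, (k : ℕ) < r → d k = 0) ∧
            ∀ j : Fin n, r ≤ (j : ℕ) → Y i j = ∑ k, Y j k * d k} := by
  ext V
  constructor
  · exact fun h => B4.dir_forward h
  · rintro ⟨h1, h2, h3⟩
    exact B5.dir_backward h1 h2 h3

lemma quad_zero_of_supported {V : Matrix (Fin n) (Fin n) ℝ}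
    (hz : ∀ i j : Fin n, r ≤ (i : ℕ) → r ≤ (j : ℕ) → V i j = 0)
    {x : Fin n → ℝ} (hx : ∀ i : Fin n, (i : ℕ) < r → x i = 0) :
    x ⬝ᵥ (V *ᵥ x) = 0 := by
  rw [PsdAux.quad_eq_sum]
  refine Finset.sum_eq_zero fun i _ => Finset.sum_eq_zero fun j _ => ?_
  by_cases hi : (i : ℕ) < r
  · rw [hx i hi]; ring
  · by_cases hj : (j : ℕ) < r
    · rw [hx j hj]; ring
    · rw [hz i j (le_of_not_gt hi) (le_of_not_gt hj)]; ring

lemma polarization {V : Matrix (Fin n) (Fin n) ℝ} (hsym : V.IsSymm)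
    (h1 : BottomBlockPSD r V) (h2 : BottomBlockPSD r (-V)) :
    ∀ i j : Fin n, r ≤ (i : ℕ) → r ≤ (j : ℕ) → V i j = 0 := by
  have hq0 : ∀ x : Fin n → ℝ, (∀ i : Fin n, (i : ℕ) < r → x i = 0) →
      x ⬝ᵥ (V *ᵥ x) = 0 := by
    intro x hx
    have ha := h1 x hx
    have hb := h2 x hx
    rw [Matrix.neg_mulVec, dotProduct_neg] at hb
    linarith
  have hdiag : ∀ j : Fin n, r ≤ (j : ℕ) → V j j = 0 := by
    intro j hj
    have hx : ∀ i : Fin n, (i : ℕ) < r → (Pi.single j 1 : Fin n → ℝ) i = 0 := by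
      intro i hi
      exact Pi.single_eq_of_ne (fun h => by rw [h] at hi; omega) 1
    have := hq0 (Pi.single j 1) hx
    rwa [single_dotProduct, Matrix.mulVec_single_one, one_mul, Matrix.col_apply] at this
  intro i j hi hj
  by_cases hij : i = j
  · subst hij; exact hdiag i hi
  · have hx : ∀ k : Fin n, (k : ℕ) < r →
        ((Pi.single i 1 : Fin n → ℝ) + (Pi.single j 1 : Fin n → ℝ)) k = 0 := by
      intro k hk
      have h1' : (Pi.single i 1 : Fin n → ℝ) k = 0 :=
        Pi.single_eq_of_ne (fun h => by rw [h] at hk; omega) 1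
      have h2' : (Pi.single j 1 : Fin n → ℝ) k = 0 :=
        Pi.single_eq_of_ne (fun h => by rw [h] at hk; omega) 1
      simp [h1', h2']
    have hq := hq0 _ hx
    rw [Matrix.mulVec_add, dotProduct_add, add_dotProduct, add_dotProduct,
      Matrix.mulVec_single_one, Matrix.mulVec_single_one,
      single_dotProduct, single_dotProduct, single_dotProduct, single_dotProduct] at hq
    simp only [Matrix.col_apply, one_mul] at hq
    have hsymm := Matrix.IsSymm.ext_iff.mp hsym j i
    have hd1 := hdiag i hi
    have hd2 := hdiag j hj
    -- hq : V i i + V j i + (V i j + V j j) = 0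
    linarith

lemma closed_T : IsClosed {Y : Matrix (Fin n) (Fin n) ℝ | Y.IsSymm ∧ BottomBlockPSD r Y} := by
  have hcont : ∀ (i j : Fin n), Continuous fun Y : Matrix (Fin n) (Fin n) ℝ => Y i j :=
    fun i j => (continuous_apply j).comp (continuous_apply i)
  have h1 : {Y : Matrix (Fin n) (Fin n) ℝ | Y.IsSymm ∧ BottomBlockPSD r Y} =
      (⋂ (i : Fin n) (j : Fin n), {Y : Matrix (Fin n) (Fin n) ℝ | Y j i = Y i j}) ∩
      (⋂ (x : Fin n → ℝ) (_ : ∀ i : Fin n, (i : ℕ) < r → x i = 0),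
        {Y : Matrix (Fin n) (Fin n) ℝ | 0 ≤ x ⬝ᵥ (Y *ᵥ x)}) := by
    ext Y
    simp only [Set.mem_setOf_eq, Set.mem_inter_iff, Set.mem_iInter, Matrix.IsSymm.ext_iff,
      BottomBlockPSD]
  rw [h1]
  refine IsClosed.inter ?_ ?_
  · exact isClosed_iInter fun i => isClosed_iInter fun j => isClosed_eq (hcont j i) (hcont i j)
  · refine isClosed_iInter fun x => isClosed_iInter fun _ => ?_
    have hc : Continuous fun Y : Matrix (Fin n) (Fin n) ℝ => x ⬝ᵥ (Y *ᵥ x) := by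
      have he : (fun Y : Matrix (Fin n) (Fin n) ℝ => x ⬝ᵥ (Y *ᵥ x)) =
          fun Y => ∑ i, ∑ j, x i * Y i j * x j := funext fun Y => PsdAux.quad_eq_sum Y x
      rw [he]
      exact continuous_finset_sum _ fun i _ => continuous_finset_sum _ fun j _ =>
        (continuous_const.mul (hcont i j)).mul continuous_const
    exact isClosed_le continuous_const hc

end B6

namespace B7
variable {n r : ℕ}

def Pmat (n r : ℕ) : Matrix (Fin n) (Fin n) ℝ :=
  Matrix.diagonal fun i : Fin n => if r ≤ (i : ℕ) then 1 else 0

lemma perturb_mem_dir {Y : Matrix (Fin n) (Fin n) ℝ} (hsym : Y.IsSymm)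
    (hbb : BottomBlockPSD r Y) {t : ℝ} (ht : 0 < t) :
    Y + t • Pmat n r ∈ dirMat (ZMat n r) (PSDCone n) := by
  classical
  set P := Pmat n r with hPdef
  set M := Y + t • P with hMdef
  have hPapp : ∀ i j : Fin n, P i j = if i = j ∧ r ≤ (i : ℕ) then 1 else 0 := by
    intro i j
    by_cases h : i = j
    · subst h; simp [hPdef, Pmat, Matrix.diagonal_apply_eq]
    · simp [hPdef, Pmat, Matrix.diagonal_apply_ne _ h, h]
  have hMsym : M.IsSymm := by
    refine Matrix.IsSymm.ext fun i j => ?_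
    simp only [hMdef, Matrix.add_apply, Matrix.smul_apply, smul_eq_mul, hPapp]
    rw [Matrix.IsSymm.ext_iff.mp hsym i j]
    by_cases h : i = j
    · subst h; rfl
    · rw [if_neg, if_neg]
      · rintro ⟨h1, -⟩; exact h h1
      · rintro ⟨h1, -⟩; exact h h1.symm
  have hPmv : ∀ (y : Fin n → ℝ) (j : Fin n),
      (P *ᵥ y) j = if r ≤ (j : ℕ) then y j else 0 := by
    intro y j
    rw [hPdef, Pmat, Matrix.mulVec_diagonal]
    by_cases h : r ≤ (j : ℕ) <;> simp [h]
  have hMquad : ∀ x : Fin n → ℝ, (∀ i : Fin n, (i : ℕ) < r → x i = 0) →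
      x ⬝ᵥ (M *ᵥ x) = x ⬝ᵥ (Y *ᵥ x) + t * ∑ i, x i ^ 2 := by
    intro x hx
    rw [hMdef, Matrix.add_mulVec, Matrix.smul_mulVec, dotProduct_add, dotProduct_smul,
      smul_eq_mul]
    congr 1
    rw [dotProduct]
    congr 1
    refine Finset.sum_congr rfl fun i _ => ?_
    rw [hPmv]
    by_cases h : r ≤ (i : ℕ)
    · rw [if_pos h]; ring
    · rw [if_neg h, hx i (Nat.lt_of_not_le h)]; ring
  have hMbb : BottomBlockPSD r M := by
    intro x hx
    rw [hMquad x hx]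
    have h1 := hbb x hx
    have h2 : 0 ≤ ∑ i, x i ^ 2 := Finset.sum_nonneg fun i _ => sq_nonneg _
    nlinarith
  have hPD : ∀ x : Fin n → ℝ, (∀ i : Fin n, (i : ℕ) < r → x i = 0) → x ≠ 0 →
      0 < x ⬝ᵥ (M *ᵥ x) := by
    intro x hx hne
    rw [hMquad x hx]
    have h1 := hbb x hx
    have h2 : 0 < ∑ i, x i ^ 2 := by
      obtain ⟨i, hi⟩ := Function.ne_iff.mp hne
      refine Finset.sum_pos' (fun j _ => sq_nonneg _) ⟨i, Finset.mem_univ i, ?_⟩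
      simpa using pow_pos (abs_pos.mpr hi) 2 |>.trans_eq (by rw [← abs_pow, abs_of_nonneg (sq_nonneg _)])
    nlinarith
  -- the linear system
  set G := P * M * P + (1 - P) with hGdef
  have hGx : ∀ (y : Fin n → ℝ) (j : Fin n),
      (G *ᵥ y) j = if r ≤ (j : ℕ) then (M *ᵥ (P *ᵥ y)) j else y j := by
    intro y j
    have e0 : P *ᵥ (M *ᵥ (P *ᵥ y)) = (P * M * P) *ᵥ y := by
      rw [Matrix.mulVec_mulVec, Matrix.mulVec_mulVec]
    have e1 : G *ᵥ y = P *ᵥ (M *ᵥ (P *ᵥ y)) + (y - P *ᵥ y) := by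
      rw [hGdef, Matrix.add_mulVec, Matrix.sub_mulVec, Matrix.one_mulVec, e0]
    rw [e1]
    simp only [Pi.add_apply, Pi.sub_apply]
    rw [hPmv, hPmv]
    by_cases h : r ≤ (j : ℕ) <;> simp [h]
  have h0 : ∀ x : Fin n → ℝ, G *ᵥ x = 0 → x = 0 := by
    intro x hx
    have hlow : ∀ j : Fin n, (j : ℕ) < r → x j = 0 := by
      intro j hj
      have := congrFun hx j
      rwa [hGx, if_neg (Nat.not_le.mpr hj), Pi.zero_apply] at this
    have hPx : P *ᵥ x = x := by
      funext j
      rw [hPmv]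
      by_cases h : r ≤ (j : ℕ)
      · rw [if_pos h]
      · rw [if_neg h, hlow j (Nat.lt_of_not_le h)]
    have hhigh : ∀ j : Fin n, r ≤ (j : ℕ) → (M *ᵥ x) j = 0 := by
      intro j hj
      have := congrFun hx j
      rwa [hGx, if_pos hj, hPx, Pi.zero_apply] at this
    have hquad : x ⬝ᵥ (M *ᵥ x) = 0 := by
      rw [dotProduct]
      refine Finset.sum_eq_zero fun j _ => ?_
      by_cases h : r ≤ (j : ℕ)
      · rw [hhigh j h, mul_zero]
      · rw [hlow j (Nat.lt_of_not_le h), zero_mul]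
    by_contra hne
    exact absurd hquad (ne_of_gt (hPD x hlow hne))
  have hinj : Function.Injective G.mulVecLin := by
    intro a b hab
    have : G *ᵥ (a - b) = 0 := by
      have := sub_eq_zero.mpr hab
      rwa [← map_sub] at this
    have := h0 _ this
    exact sub_eq_zero.mp this
  have hsurj : Function.Surjective G.mulVecLin :=
    (LinearMap.injective_iff_surjective_of_finrank_eq_finrank rfl).mp hinj
  refine B5.dir_backward hMsym hMbb fun i hi => ?_
  obtain ⟨xx, hxx⟩ := hsurj (fun j : Fin n => if r ≤ (j : ℕ) then Y i j else 0)
  refine ⟨P *ᵥ xx, ?_, ?_⟩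
  · intro k hk
    rw [hPmv, if_neg (Nat.not_le.mpr hk)]
  · intro j hj
    have h1 := congrFun hxx j
    rw [Matrix.mulVecLin_apply, hGx, if_pos hj] at h1
    simp only [if_pos hj] at h1
    have h2 : M i j = Y i j := by
      rw [hMdef, Matrix.add_apply, Matrix.smul_apply, hPapp, smul_eq_mul]
      rw [if_neg, mul_zero, add_zero]
      rintro ⟨h3, -⟩
      rw [h3] at hi; omega
    rw [h2, ← h1]
    rfl

lemma cl_dir : closure (dirMat (ZMat n r) (PSDCone n)) =
    {Y : Matrix (Fin n) (Fin n) ℝ | Y.IsSymm ∧ BottomBlockPSD r Y} := by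
  apply subset_antisymm
  · refine closure_minimal (fun V hV => ?_) B6.closed_T
    obtain ⟨h1, h2, -⟩ := B4.dir_forward hV
    exact ⟨h1, h2⟩
  · rintro Y ⟨hsym, hbb⟩
    have h1 : Filter.Tendsto (fun m : ℕ => (1 / (m + 1) : ℝ)) Filter.atTop (nhds 0) :=
      tendsto_one_div_add_atTop_nhds_zero_nat
    have h2 : Filter.Tendsto (fun m : ℕ => Y + (1 / (m + 1) : ℝ) • Pmat n r)
        Filter.atTop (nhds Y) := by
      have h3 := Filter.Tendsto.const_add Y (h1.smul_const (Pmat n r))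
      simpa using h3
    refine mem_closure_of_tendsto h2 (Filter.Eventually.of_forall fun m => ?_)
    have hm : 0 < (1 / (m + 1) : ℝ) := by positivity
    exact perturb_mem_dir hsym hbb hm

end B7

namespace B8
variable {n r : ℕ}

lemma tan_char : tanMat (ZMat n r) (PSDCone n) =
    {Y : Matrix (Fin n) (Fin n) ℝ | Y.IsSymm ∧
      ∀ i j : Fin n, r ≤ (i : ℕ) → r ≤ (j : ℕ) → Y i j = 0} := by
  ext V
  constructor
  · rintro ⟨h1, h2⟩
    rw [B7.cl_dir] at h1 h2
    obtain ⟨hs, hb⟩ := h1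
    obtain ⟨-, hb'⟩ := h2
    exact ⟨hs, B6.polarization hs hb hb'⟩
  · rintro ⟨hsym, hz⟩
    have hnsym : (-V).IsSymm := by
      refine Matrix.IsSymm.ext fun i j => ?_
      simp only [Matrix.neg_apply, Matrix.IsSymm.ext_iff.mp hsym i j]
    constructor <;> rw [B7.cl_dir]
    · exact ⟨hsym, fun x hx => le_of_eq (B6.quad_zero_of_supported hz hx).symm⟩
    · refine ⟨hnsym, fun x hx => ?_⟩
      rw [Matrix.neg_mulVec, dotProduct_neg, B6.quad_zero_of_supported hz hx, neg_zero]

lemma ldir_char : ldirMat (ZMat n r) (PSDCone n) =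
    {Y : Matrix (Fin n) (Fin n) ℝ | Y.IsSymm ∧
      ∀ i j : Fin n, (r ≤ (i : ℕ) ∨ r ≤ (j : ℕ)) → Y i j = 0} := by
  ext V
  constructor
  · rintro ⟨h1, h2⟩
    obtain ⟨hs, hb, hr⟩ := B4.dir_forward h1
    obtain ⟨-, hb', -⟩ := B4.dir_forward h2
    have hbz := B6.polarization hs hb hb'
    have hz2 : ∀ i j : Fin n, (i : ℕ) < r → r ≤ (j : ℕ) → V i j = 0 := by
      intro i j hi hj
      obtain ⟨d, hd0, hd⟩ := hr i hi
      rw [hd j hj]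
      refine Finset.sum_eq_zero fun k _ => ?_
      by_cases hk : (k : ℕ) < r
      · rw [hd0 k hk, mul_zero]
      · rw [hbz j k hj (Nat.le_of_not_lt hk), zero_mul]
    refine ⟨hs, fun i j hij => ?_⟩
    by_cases hi : r ≤ (i : ℕ)
    · by_cases hj : r ≤ (j : ℕ)
      · exact hbz i j hi hj
      · rw [← Matrix.IsSymm.ext_iff.mp hs i j]
        exact hz2 j i (Nat.lt_of_not_le hj) hi
    · rcases hij with hi' | hj
      · exact absurd hi' hi
      · exact hz2 i j (Nat.lt_of_not_le hi) hj
  · rintro ⟨hsym, hz⟩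
    have hbz : ∀ i j : Fin n, r ≤ (i : ℕ) → r ≤ (j : ℕ) → V i j = 0 :=
      fun i j hi _ => hz i j (Or.inl hi)
    have hnsym : (-V).IsSymm := by
      refine Matrix.IsSymm.ext fun i j => ?_
      simp only [Matrix.neg_apply, Matrix.IsSymm.ext_iff.mp hsym i j]
    constructor
    · refine B5.dir_backward hsym
        (fun x hx => le_of_eq (B6.quad_zero_of_supported hbz hx).symm) fun i hi => ?_
      refine ⟨0, fun k _ => rfl, fun j hj => ?_⟩
      rw [hz i j (Or.inr hj)]
      simp
    · refine B5.dir_backward hnsym (fun x hx => ?_) fun i hi => ?_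
      · rw [Matrix.neg_mulVec, dotProduct_neg, B6.quad_zero_of_supported hbz hx, neg_zero]
      · refine ⟨0, fun k _ => rfl, fun j hj => ?_⟩
        rw [Matrix.neg_apply, hz i j (Or.inr hj)]
        simp

end B8


/-- description of `ldir`, `cl dir`, `tan` and `dir` of the positive
semidefinite cone at `Z = I_r ⊕ 0`, with `Y` partitioned into blocks of sizes `r` and
`n - r`: `ldir = {Y : Y₁₂ = 0, Y₂₂ = 0}`, `cl dir = {Y : Y₂₂ ⪰ 0}`, `tan = {Y : Y₂₂ = 0}`,
`dir = {Y : Y₂₂ ⪰ 0, R(Y₁₂ᵀ) ⊆ R(Y₂₂)}` (all within the space `S^n` of symmetric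
matrices). -/
theorem psd_dir_sets {n r : ℕ} :
    ldirMat (ZMat n r) (PSDCone n) =
      {Y : Matrix (Fin n) (Fin n) ℝ | Y.IsSymm ∧
        ∀ i j : Fin n, (r ≤ (i : ℕ) ∨ r ≤ (j : ℕ)) → Y i j = 0} ∧
    closure (dirMat (ZMat n r) (PSDCone n)) =
      {Y : Matrix (Fin n) (Fin n) ℝ | Y.IsSymm ∧ BottomBlockPSD r Y} ∧
    tanMat (ZMat n r) (PSDCone n) =
      {Y : Matrix (Fin n) (Fin n) ℝ | Y.IsSymm ∧
        ∀ i j : Fin n, r ≤ (i : ℕ) → r ≤ (j : ℕ) → Y i j = 0} ∧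
    dirMat (ZMat n r) (PSDCone n) =
      {Y : Matrix (Fin n) (Fin n) ℝ | Y.IsSymm ∧ BottomBlockPSD r Y ∧
        ∀ i : Fin n, (i : ℕ) < r →
          ∃ d : Fin n → ℝ, (∀ k : Fin n, (k : ℕ) < r → d k = 0) ∧
            ∀ j : Fin n, r ≤ (j : ℕ) → Y i j = ∑ k, Y j k * d k} := by
  exact ⟨B8.ldir_char, B7.cl_dir, B8.tan_char, B6.dir_char⟩
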